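/- For all n ≥ 0, 0 < f_n and f_n ≤ h_n, where (f_n) is the sequence obtained from the binary hipster recurrence by replacing the subtracted h-term with the corresponding Catalan number. -/

import Mathlib

/-- For all `n ≥ 0`, `0 < f n` and `f n ≤ h n`, where `f` is obtained from the
binary hipster recurrence by replacing the subtracted `h`-term with the
corresponding Catalan number. -/
theorem binary_hipster_lower_approx
    (c h f : ℕ → ℤ)
    (hc0 : c 0 = 1)
    (hc : ∀ n, 1 ≤ n → c n = ∑ i ∈ Finset.range n, c i * c (n - 1 - i))
    (hh0 : h 0 = 1)
    (hh : ∀ n, 1 ≤ n →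
      h n = (∑ i ∈ Finset.range n, h i * h (n - 1 - i))
              - (if Odd n then h ((n - 1) / 2) else 0)
              + (if n = 1 then 1 else 0))
    (hf0 : f 0 = 1)
    (hf : ∀ n, 1 ≤ n →
      f n = (∑ i ∈ Finset.range n, f i * f (n - 1 - i))
              - (if Odd n then c ((n - 1) / 2) else 0)
              + (if n = 1 then 1 else 0)) :
    ∀ n, 0 < f n ∧ f n ≤ h n := by
  have key : ∀ m : ℕ, 0 < f m ∧ f m ≤ h m ∧ h m ≤ c m ∧
      (∀ k, m = 2 * k → c k ≤ f m) ∧ (Odd m → f (m - 1) ≤ f m) := by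
    intro m
    induction m using Nat.strong_induction_on with
    | _ m ih =>
    rcases Nat.eq_zero_or_pos m with hm0 | hm1
    · subst hm0
      refine ⟨by rw [hf0]; norm_num, by rw [hf0, hh0], by rw [hh0, hc0], ?_, ?_⟩
      · intro k hk
        have : k = 0 := by omega
        subst this
        rw [hc0, hf0]
      · intro hodd; exact absurd hodd (by decide)
    · -- m ≥ 1
      have hfpos : ∀ i, i < m → 0 < f i := fun i hi => (ih i hi).1
      have hfh : ∀ i, i < m → f i ≤ h i := fun i hi => (ih i hi).2.1
      have hhc : ∀ i, i < m → h i ≤ c i := fun i hi => (ih i hi).2.2.1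
      have hcf : ∀ i k, i < m → i = 2 * k → c k ≤ f i :=
        fun i k hi he => (ih i hi).2.2.2.1 k he
      have hstep : ∀ i, i < m → Odd i → f (i - 1) ≤ f i :=
        fun i hi ho => (ih i hi).2.2.2.2 ho
      have hhpos : ∀ i, i < m → 0 < h i := fun i hi =>
        lt_of_lt_of_le (hfpos i hi) (hfh i hi)
      have hcpos : ∀ i, i < m → 0 < c i := fun i hi =>
        lt_of_lt_of_le (hhpos i hi) (hhc i hi)
      have hidx : ∀ i, i ∈ Finset.range m → i < m ∧ m - 1 - i < m := by
        intro i hi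
        simp only [Finset.mem_range] at hi
        omega
      have sum_ff_nonneg : ∀ i ∈ Finset.range m, 0 ≤ f i * f (m - 1 - i) := by
        intro i hi
        obtain ⟨h1, h2⟩ := hidx i hi
        exact le_of_lt (mul_pos (hfpos _ h1) (hfpos _ h2))
      have sum_fh : (∑ i ∈ Finset.range m, f i * f (m-1-i)) ≤
          ∑ i ∈ Finset.range m, h i * h (m-1-i) := by
        apply Finset.sum_le_sum
        intro i hi
        obtain ⟨h1, h2⟩ := hidx i hi
        exact mul_le_mul (hfh _ h1) (hfh _ h2) (le_of_lt (hfpos _ h2))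
          (le_of_lt (hhpos _ h1))
      have sum_hc : (∑ i ∈ Finset.range m, h i * h (m-1-i)) ≤
          ∑ i ∈ Finset.range m, c i * c (m-1-i) := by
        apply Finset.sum_le_sum
        intro i hi
        obtain ⟨h1, h2⟩ := hidx i hi
        exact mul_le_mul (hhc _ h1) (hhc _ h2) (le_of_lt (hhpos _ h2))
          (le_of_lt (hcpos _ h1))
      have hk2 : (m - 1) / 2 < m := by omega
      have goal2 : f m ≤ h m := by
        rw [hf m hm1, hh m hm1]
        have : (if Odd m then h ((m-1)/2) else 0) ≤
            (if Odd m then c ((m-1)/2) else 0) := by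
          by_cases ho : Odd m
          · simp only [if_pos ho]; exact hhc _ hk2
          · simp [ho]
        linarith [sum_fh]
      have goal3 : h m ≤ c m := by
        rw [hh m hm1, hc m hm1]
        have : (if m = 1 then (1:ℤ) else 0) ≤
            (if Odd m then h ((m-1)/2) else 0) := by
          by_cases h1 : m = 1
          · subst h1; norm_num [hh0]
          · simp only [if_neg h1]
            by_cases ho : Odd m
            · simp only [if_pos ho]; exact le_of_lt (hhpos _ hk2)
            · simp [ho]
        linarith [sum_hc]
      rcases Nat.even_or_odd m with hev | hod
      · -- even case
        have hno : ¬ Odd m := Nat.not_odd_iff_even.mpr hev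
        have hn1 : m ≠ 1 := by rintro rfl; exact hno (by decide)
        have hfm : f m = ∑ i ∈ Finset.range m, f i * f (m-1-i) := by
          rw [hf m hm1, if_neg hno, if_neg hn1]; ring
        have goal1 : 0 < f m := by
          rw [hfm]
          have h0mem : (0:ℕ) ∈ Finset.range m := Finset.mem_range.mpr hm1
          have hterm : 0 < f 0 * f (m - 1 - 0) := by
            rw [hf0]; simpa using hfpos (m-1) (by omega)
          calc (0:ℤ) < f 0 * f (m-1-0) := hterm
            _ ≤ ∑ i ∈ Finset.range m, f i * f (m-1-i) :=
              Finset.single_le_sum sum_ff_nonneg h0mem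
        refine ⟨goal1, goal2, goal3, ?_, fun ho => absurd ho hno⟩
        intro n hmn
        have hn1' : 1 ≤ n := by omega
        rw [hfm, hc n hn1']
        have hsub : (Finset.range n).image (fun i => 2*i+1) ⊆ Finset.range m := by
          intro j hj
          simp only [Finset.mem_image, Finset.mem_range] at hj ⊢
          obtain ⟨i, hi, rfl⟩ := hj
          omega
        have hinj : ∀ x ∈ Finset.range n, ∀ y ∈ Finset.range n,
            2*x+1 = 2*y+1 → x = y := by intro x _ y _ hxy; omega
        have himg : (∑ j ∈ (Finset.range n).image (fun i => 2*i+1), f j * f (m-1-j))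
            = ∑ i ∈ Finset.range n, f (2*i+1) * f (m-1-(2*i+1)) :=
          Finset.sum_image hinj
        have hterm : ∀ i ∈ Finset.range n,
            c i * c (n-1-i) ≤ f (2*i+1) * f (m-1-(2*i+1)) := by
          intro i hi
          simp only [Finset.mem_range] at hi
          have e1 : m - 1 - (2*i+1) = 2*(n-1-i) := by omega
          rw [e1]
          have hci : c i ≤ f (2*i+1) := by
            have h1 : c i ≤ f (2*i) := hcf (2*i) i (by omega) rfl
            have h2 : f (2*i) ≤ f (2*i+1) := by
              have := hstep (2*i+1) (by omega) ⟨i, by omega⟩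
              simpa using this
            linarith
          have hcj : c (n-1-i) ≤ f (2*(n-1-i)) := hcf _ _ (by omega) rfl
          have hc1 : 0 ≤ c (n-1-i) := le_of_lt (hcpos _ (by omega))
          have hf1 : 0 ≤ f (2*i+1) := le_of_lt (hfpos _ (by omega))
          exact mul_le_mul hci hcj hc1 hf1
        calc (∑ i ∈ Finset.range n, c i * c (n-1-i))
            ≤ ∑ i ∈ Finset.range n, f (2*i+1) * f (m-1-(2*i+1)) :=
              Finset.sum_le_sum hterm
          _ = ∑ j ∈ (Finset.range n).image (fun i => 2*i+1), f j * f (m-1-j) :=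
              himg.symm
          _ ≤ ∑ j ∈ Finset.range m, f j * f (m-1-j) :=
              Finset.sum_le_sum_of_subset_of_nonneg hsub
                (fun j hj _ => sum_ff_nonneg j hj)
      · -- odd case
        rcases eq_or_lt_of_le (by omega : 1 ≤ m) with h1 | h3
        · -- m = 1
          have hm1' : m = 1 := h1.symm
          subst hm1'
          have hf1 : f 1 = 1 := by
            rw [hf 1 le_rfl]
            simp [Finset.sum_range_one, hf0, hc0]
          refine ⟨by rw [hf1]; norm_num, goal2, goal3, ?_, ?_⟩
          · intro k hk; omega
          · intro _; simp [hf1, hf0]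
        · -- m odd, m ≥ 3
          obtain ⟨k, hk⟩ := hod
          have hfm : f m = (∑ i ∈ Finset.range m, f i * f (m-1-i)) - c k := by
            rw [hf m hm1, if_pos ⟨k, hk⟩, if_neg (by omega)]
            have hq : (m-1)/2 = k := by omega
            rw [hq]; ring
          have hsum2 : 2 * f (m-1) ≤ ∑ i ∈ Finset.range m, f i * f (m-1-i) := by
            have hsub : ({0, m-1} : Finset ℕ) ⊆ Finset.range m := by
              intro j hj
              simp only [Finset.mem_insert, Finset.mem_singleton] at hj
              rcases hj with rfl | rfl <;> simp only [Finset.mem_range] <;> omega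
            have hpair : (∑ i ∈ ({0, m-1} : Finset ℕ), f i * f (m-1-i))
                = f 0 * f (m-1-0) + f (m-1) * f (m-1-(m-1)) :=
              Finset.sum_pair (by omega)
            have hval : (∑ i ∈ ({0, m-1} : Finset ℕ), f i * f (m-1-i))
                = 2 * f (m-1) := by
              rw [hpair]
              have e1 : m - 1 - 0 = m - 1 := by omega
              have e2 : m - 1 - (m-1) = 0 := by omega
              rw [e1, e2, hf0]; ring
            rw [← hval]
            exact Finset.sum_le_sum_of_subset_of_nonneg hsub
              (fun j hj _ => sum_ff_nonneg j hj)
          have hck : c k ≤ f (m-1) := hcf (m-1) k (by omega) (by omega)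
          have hstep' : f (m-1) ≤ f m := by
            rw [hfm]; linarith
          have goal1 : 0 < f m := lt_of_lt_of_le (hfpos (m-1) (by omega)) hstep'
          exact ⟨goal1, goal2, goal3, fun n hn => by exfalso; omega, fun _ => hstep'⟩
  intro n
  exact ⟨(key n).1, (key n).2.1⟩
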